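/- Let τ > 0, k₁, k₂ ∈ ℝ and r ∈ (0,1) be such that every complex root w of the polynomial w² + 2k₁·w + (k₂ − 1) satisfies |w| < r. Then there exists C > 0 such that for every M ≥ 0 and every function Y : ℝ → ℝ satisfying Y(t) + 2k₁·Y(t−τ) + (k₂ − 1)·Y(t−2τ) = 0 for all t ≥ 0 and |Y(s)| ≤ M for all s ∈ [−2τ, 0], one has |Y(t)| ≤ C·r^{t/τ}·M for all t ≥ 0. -/

import Mathlib

private lemma aux_bdd (q : ℝ) (hq0 : 0 ≤ q) (hq1 : q < 1) :
    ∃ C : ℝ, 1 ≤ C ∧ ∀ n : ℕ, ((n : ℝ) + 1) * q ^ n ≤ C := by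
  have hsum : Summable (fun n : ℕ => (n : ℝ) ^ 1 * q ^ n) :=
    summable_pow_mul_geometric_of_norm_lt_one 1
      (by rwa [Real.norm_eq_abs, abs_of_nonneg hq0])
  obtain ⟨b, hb⟩ := hsum.tendsto_atTop_zero.bddAbove_range
  refine ⟨b + 1, ?_, ?_⟩
  · have h0 : (0 : ℝ) ≤ b := by
      have := hb (Set.mem_range_self 0); simpa using this
    linarith
  · intro n
    have h1 : (n : ℝ) * q ^ n ≤ b := by
      have := hb (Set.mem_range_self n); simpa using this
    have h2 : q ^ n ≤ 1 := pow_le_one₀ hq0 hq1.le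
    nlinarith

private lemma aux_seq (α β : ℂ) (s K : ℝ) (hs : 0 < s) (hα : ‖α‖ ≤ s) (hβ : ‖β‖ ≤ s)
    (y : ℕ → ℂ) (hrec : ∀ n, y (n + 2) = (α + β) * y (n + 1) - α * β * y n)
    (h0 : ‖y 0‖ ≤ K) (h1 : ‖y 1 - α * y 0‖ ≤ s * K) :
    ∀ n, ‖y n‖ ≤ ((n : ℝ) + 1) * s ^ n * K := by
  have hz : ∀ n, ‖y (n + 1) - α * y n‖ ≤ s ^ (n + 1) * K := by
    intro n
    induction n with
    | zero => simpa using h1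
    | succ m ih =>
      have heq : y (m + 2) - α * y (m + 1) = β * (y (m + 1) - α * y m) := by
        rw [hrec m]; ring
      rw [heq, norm_mul]
      calc ‖β‖ * ‖y (m + 1) - α * y m‖ ≤ s * (s ^ (m + 1) * K) :=
            mul_le_mul hβ ih (norm_nonneg _) hs.le
        _ = s ^ (m + 2) * K := by ring
  intro n
  induction n with
  | zero => simpa using h0
  | succ m ih =>
    have h := hz m
    calc ‖y (m + 1)‖ = ‖α * y m + (y (m + 1) - α * y m)‖ := by congr 1; ring
      _ ≤ ‖α * y m‖ + ‖y (m + 1) - α * y m‖ := norm_add_le _ _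
      _ = ‖α‖ * ‖y m‖ + ‖y (m + 1) - α * y m‖ := by rw [norm_mul]
      _ ≤ s * (((m : ℝ) + 1) * s ^ m * K) + s ^ (m + 1) * K := by
          have := mul_le_mul hα ih (norm_nonneg _) hs.le
          linarith
      _ = ((↑(m + 1) : ℝ) + 1) * s ^ (m + 1) * K := by push_cast; ring

theorem stmt_14 (τ k₁ k₂ r : ℝ) (hτ : 0 < τ) (hr : 0 < r) (hr1 : r < 1)
    (hroots : ∀ w : ℂ, w ^ 2 + 2 * (k₁ : ℂ) * w + ((k₂ : ℂ) - 1) = 0 → ‖w‖ < r) :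
    ∃ C : ℝ, 0 < C ∧
      ∀ M : ℝ, 0 ≤ M →
        ∀ Y : ℝ → ℝ,
          (∀ t : ℝ, 0 ≤ t → Y t + 2 * k₁ * Y (t - τ) + (k₂ - 1) * Y (t - 2 * τ) = 0) →
          (∀ s ∈ Set.Icc (-(2 * τ)) (0 : ℝ), |Y s| ≤ M) →
          ∀ t : ℝ, 0 ≤ t → |Y t| ≤ C * r ^ (t / τ) * M := by
  obtain ⟨δ, hδ⟩ := IsAlgClosed.exists_pow_nat_eq ((k₁ : ℂ) ^ 2 - ((k₂ : ℂ) - 1)) (n := 2)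
    (by norm_num)
  set α : ℂ := -(k₁ : ℂ) + δ with hαdef
  set β : ℂ := -(k₁ : ℂ) - δ with hβdef
  have hαr : ‖α‖ < r := by
    exact hroots α (by rw [hαdef]; linear_combination hδ)
  have hβr : ‖β‖ < r := by
    exact hroots β (by rw [hβdef]; linear_combination hδ)
  have hsumαβ : α + β = -2 * (k₁ : ℂ) := by rw [hαdef, hβdef]; ring
  have hprodαβ : α * β = (k₂ : ℂ) - 1 := by
    rw [hαdef, hβdef]; linear_combination -hδ
  set s : ℝ := max (max ‖α‖ ‖β‖) (r / 2) with hsdef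
  have hs : 0 < s := lt_of_lt_of_le (by linarith) (le_max_right _ _)
  have hsr : s < r := by
    apply max_lt (max_lt hαr hβr) (by linarith)
  have hαs : ‖α‖ ≤ s := le_trans (le_max_left _ _) (le_max_left _ _)
  have hβs : ‖β‖ ≤ s := le_trans (le_max_right _ _) (le_max_left _ _)
  obtain ⟨C₁, hC₁1, hC₁⟩ := aux_bdd (s / r) (by positivity) ((div_lt_one hr).2 hsr)
  have hc₂ : (0 : ℝ) < (2 * s + 1) / s := by positivity
  refine ⟨C₁ * ((2 * s + 1) / s), by positivity, ?_⟩
  intro M hM Y hrec hinit t ht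
  set n : ℕ := ⌈t / τ⌉₊ with hndef
  have hdiv : 0 ≤ t / τ := div_nonneg ht hτ.le
  have hn1 : t / τ ≤ (n : ℝ) := Nat.le_ceil _
  have hn2 : (n : ℝ) < t / τ + 1 := Nat.ceil_lt_add_one hdiv
  set t₀ : ℝ := t - n * τ with ht₀def
  have ht₀a : -τ < t₀ := by
    have : (n : ℝ) * τ < (t / τ + 1) * τ := by
      exact mul_lt_mul_of_pos_right hn2 hτ
    rw [ht₀def]
    have := div_mul_cancel₀ t (ne_of_gt hτ)
    nlinarith
  have ht₀b : t₀ ≤ 0 := by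
    have : t / τ * τ ≤ (n : ℝ) * τ := mul_le_mul_of_nonneg_right hn1 hτ.le
    rw [ht₀def]
    have h2 := div_mul_cancel₀ t (ne_of_gt hτ)
    nlinarith
  set y : ℕ → ℂ := fun j => ((Y (t₀ - τ + j * τ) : ℝ) : ℂ) with hydef
  have hrecy : ∀ j, y (j + 2) = (α + β) * y (j + 1) - α * β * y j := by
    intro j
    have hpos : 0 ≤ t₀ - τ + (j + 2 : ℕ) * τ := by
      push_cast
      have : (0 : ℝ) ≤ (j : ℝ) * τ := by positivity
      nlinarith
    have h := hrec (t₀ - τ + (j + 2 : ℕ) * τ) hpos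
    have e1 : t₀ - τ + (j + 2 : ℕ) * τ - τ = t₀ - τ + (j + 1 : ℕ) * τ := by push_cast; ring
    have e2 : t₀ - τ + (j + 2 : ℕ) * τ - 2 * τ = t₀ - τ + (j : ℕ) * τ := by push_cast; ring
    rw [e1, e2] at h
    have h' : Y (t₀ - τ + (j + 2 : ℕ) * τ)
        = -(2 * k₁) * Y (t₀ - τ + (j + 1 : ℕ) * τ) - (k₂ - 1) * Y (t₀ - τ + (j : ℕ) * τ) := by
      linarith
    simp only [hydef, hsumαβ, hprodαβ]
    rw [h']
    push_cast
    ring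
  set K : ℝ := (2 * s + 1) / s * M with hKdef
  have hMK : M ≤ K := by
    rw [hKdef]
    have : (1 : ℝ) ≤ (2 * s + 1) / s := by
      rw [le_div_iff₀ hs]; linarith
    nlinarith
  have hmem0 : t₀ - τ + (0 : ℕ) * τ ∈ Set.Icc (-(2 * τ)) (0 : ℝ) := by
    simp only [Set.mem_Icc]
    push_cast
    constructor <;> linarith
  have hmem1 : t₀ - τ + (1 : ℕ) * τ ∈ Set.Icc (-(2 * τ)) (0 : ℝ) := by
    simp only [Set.mem_Icc]
    push_cast
    constructor <;> linarith
  have h0 : ‖y 0‖ ≤ K := by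
    calc ‖y 0‖ = |Y (t₀ - τ + (0:ℕ) * τ)| := by
          simp only [hydef, Complex.norm_real, Real.norm_eq_abs]
      _ ≤ M := hinit _ hmem0
      _ ≤ K := hMK
  have h1 : ‖y 1 - α * y 0‖ ≤ s * K := by
    have hy1 : ‖y 1‖ ≤ M := by
      calc ‖y 1‖ = |Y (t₀ - τ + (1:ℕ) * τ)| := by
            simp only [hydef, Complex.norm_real, Real.norm_eq_abs]
        _ ≤ M := hinit _ hmem1
    have hy0 : ‖y 0‖ ≤ M := by
      calc ‖y 0‖ = |Y (t₀ - τ + (0:ℕ) * τ)| := by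
            simp only [hydef, Complex.norm_real, Real.norm_eq_abs]
        _ ≤ M := hinit _ hmem0
    calc ‖y 1 - α * y 0‖ ≤ ‖y 1‖ + ‖α * y 0‖ := norm_sub_le _ _
      _ = ‖y 1‖ + ‖α‖ * ‖y 0‖ := by rw [norm_mul]
      _ ≤ M + s * M := by
          have := mul_le_mul hαs hy0 (norm_nonneg _) hs.le
          linarith
      _ ≤ s * K := by
          rw [hKdef]
          have : s * ((2 * s + 1) / s * M) = (2 * s + 1) * M := by
            field_simp
          rw [this]; nlinarith
  have hbnd := aux_seq α β s K hs hαs hβs y hrecy h0 h1 (n + 1)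
  have hyt : y (n + 1) = ((Y t : ℝ) : ℂ) := by
    simp only [hydef]
    congr 1
    push_cast
    rw [ht₀def]; ring
  have hYt : |Y t| ≤ ((n : ℝ) + 2) * s ^ (n + 1) * K := by
    have : ‖y (n+1)‖ = |Y t| := by rw [hyt, Complex.norm_real, Real.norm_eq_abs]
    rw [this] at hbnd
    convert hbnd using 2
    push_cast; ring
  -- now convert to the r-power bound
  have hK0 : 0 ≤ K := by rw [hKdef]; positivity
  have hsq : s = s / r * r := by field_simp
  have hstep : ((n : ℝ) + 2) * s ^ (n + 1) ≤ C₁ * r ^ (n + 1) := by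
    have h := hC₁ (n + 1)
    have hq : s ^ (n+1) = (s / r) ^ (n+1) * r ^ (n+1) := by
      rw [← mul_pow, ← hsq]
    rw [hq, ← mul_assoc]
    apply mul_le_mul_of_nonneg_right _ (by positivity)
    calc ((n : ℝ) + 2) * (s / r) ^ (n + 1) = ((↑(n+1) : ℝ) + 1) * (s / r) ^ (n+1) := by
          push_cast; ring
      _ ≤ C₁ := h
  have hrpow : (r : ℝ) ^ (n + 1) ≤ r ^ (t / τ) := by
    have : (r : ℝ) ^ (n + 1) = r ^ ((n + 1 : ℕ) : ℝ) := by
      rw [Real.rpow_natCast]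
    rw [this]
    apply Real.rpow_le_rpow_of_exponent_ge hr hr1.le
    push_cast; linarith
  have hrpow0 : 0 ≤ r ^ (t / τ) := Real.rpow_nonneg hr.le _
  calc |Y t| ≤ ((n : ℝ) + 2) * s ^ (n + 1) * K :=  hYt
    _ ≤ C₁ * r ^ (n + 1) * K := mul_le_mul_of_nonneg_right hstep hK0
    _ ≤ C₁ * r ^ (t / τ) * K := by
        apply mul_le_mul_of_nonneg_right _ hK0
        apply mul_le_mul_of_nonneg_left hrpow (by linarith)
    _ = C₁ * ((2 * s + 1) / s) * r ^ (t / τ) * M := by rw [hKdef]; ring
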